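/- Let r be a natural number with r ≥ 2, let p ≥ 0, K > 0, m̃ ≥ 1 and C ≥ 1 be real numbers, let p₀ > p be real, and let r₀ be a natural number with r₀ > 2·(r + m̃·K + m̃·(2C)²). Suppose L : 𝓘 → ℝ is a nonnegative family satisfying: (i) L(α) ≤ m̃·K·α!·(r^{|α|³})!·(2ℕ)^{pα} for every α with |α| = 1; and (ii) L(α) ≤ m̃·( K·α!·(r^{|α|³})!·(2ℕ)^{pα} + ∑_{k=2}^{|α|} C^k · J_k(α) ) for every α with |α| ≥ 2, where J_k(α) = ∑ L(γ¹)⋯L(γᵏ) over all ordered k-tuples (γ¹, …, γᵏ) of nonzero multiindices with γ¹ + ⋯ + γᵏ = α. Then L(α) ≤ α!·(2ℕ)^{p₀α}·(r₀^{|α|³})! for every multiindex α with |α| ≥ 1. -/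

import Mathlib

abbrev MultiIndex : Type := ℕ →₀ ℕ

/-- `|α| = ∑ₙ αₙ` -/
def msize (α : MultiIndex) : ℕ := α.sum fun _ k => k

/-- `α! = ∏ₙ (αₙ)!` -/
def mfact (α : MultiIndex) : ℕ := α.prod fun _ k => k.factorial

/-- `(2ℕ)^{cα} = ∏ₙ (2n)^{c·αₙ}`; the index `n : ℕ` stands for the position `n+1 ≥ 1`. -/
noncomputable def wt (c : ℝ) (α : MultiIndex) : ℝ :=
  α.prod fun n k => (2 * ((n : ℝ) + 1)) ^ (c * (k : ℝ))


/-- `J_k(α) = ∑ L(γ¹)⋯L(γᵏ)` over ordered `k`-tuples of nonzero multiindices summing to `α`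
(a finite sum, expressed via `finsum` over the (finite) set of such tuples). -/
noncomputable def Jsum (L : MultiIndex → ℝ) (k : ℕ) (α : MultiIndex) : ℝ :=
  ∑ᶠ γ ∈ {γ : Fin k → MultiIndex | (∀ i, γ i ≠ 0) ∧ ∑ i, γ i = α}, ∏ i, L (γ i)


open Finset

lemma wt_zero (c : ℝ) : wt c 0 = 1 := by simp [wt]

lemma wt_add (c : ℝ) (α β : MultiIndex) : wt c (α + β) = wt c α * wt c β := by
  refine Finsupp.prod_add_index' (fun n => by simp) (fun n k l => ?_)
  have hb : (0:ℝ) < 2 * ((n:ℝ) + 1) := by positivity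
  rw [Nat.cast_add, mul_add c, Real.rpow_add hb]

lemma wt_sum (c : ℝ) {ι : Type*} (s : Finset ι) (γ : ι → MultiIndex) :
    wt c (∑ i ∈ s, γ i) = ∏ i ∈ s, wt c (γ i) := by
  classical
  induction s using Finset.induction_on with
  | empty => simp [wt_zero]
  | insert _ _ h ih => rw [Finset.sum_insert h, Finset.prod_insert h, wt_add, ih]

lemma one_le_wt {c : ℝ} (hc : 0 ≤ c) (α : MultiIndex) : 1 ≤ wt c α := by
  unfold wt Finsupp.prod
  calc (1:ℝ) = ∏ _n ∈ α.support, 1 := by simp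
  _ ≤ ∏ n ∈ α.support, (2 * ((n : ℝ) + 1)) ^ (c * ((α n : ℕ) : ℝ)) := by
      refine Finset.prod_le_prod (fun n _ => zero_le_one) fun n _ => ?_
      refine Real.one_le_rpow ?_ (mul_nonneg hc (Nat.cast_nonneg _))
      have : (0:ℝ) ≤ (n:ℝ) := Nat.cast_nonneg n
      linarith

lemma wt_nonneg (c : ℝ) (α : MultiIndex) : 0 ≤ wt c α := by
  unfold wt Finsupp.prod
  exact Finset.prod_nonneg fun n _ => Real.rpow_nonneg (by positivity) _

lemma wt_mono {c c' : ℝ} (h : c ≤ c') (α : MultiIndex) : wt c α ≤ wt c' α := by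
  unfold wt Finsupp.prod
  refine Finset.prod_le_prod (fun n _ => Real.rpow_nonneg (by positivity) _) fun n _ => ?_
  refine Real.rpow_le_rpow_of_exponent_le ?_ (mul_le_mul_of_nonneg_right h (Nat.cast_nonneg _))
  have : (0:ℝ) ≤ (n:ℝ) := Nat.cast_nonneg n
  linarith

lemma msize_def (α : MultiIndex) : msize α = ∑ n ∈ α.support, α n := rfl

lemma msize_add (α β : MultiIndex) : msize (α + β) = msize α + msize β :=
  Finsupp.sum_add_index' (fun _ => rfl) (fun _ _ _ => rfl)

lemma msize_zero : msize (0 : MultiIndex) = 0 := by simp [msize]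

lemma msize_sum {ι : Type*} (s : Finset ι) (γ : ι → MultiIndex) :
    msize (∑ i ∈ s, γ i) = ∑ i ∈ s, msize (γ i) := by
  classical
  induction s using Finset.induction_on with
  | empty => simp [msize_zero]
  | insert _ _ h ih => rw [Finset.sum_insert h, Finset.sum_insert h, msize_add, ih]

lemma one_le_msize {α : MultiIndex} (h : α ≠ 0) : 1 ≤ msize α := by
  rcases Finsupp.ne_iff.mp h with ⟨n, hn⟩
  simp only [Finsupp.coe_zero, Pi.zero_apply] at hn
  have hmem : n ∈ α.support := Finsupp.mem_support_iff.mpr hn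
  have : α n ≤ msize α := by
    rw [msize_def]; exact Finset.single_le_sum (fun i _ => Nat.zero_le _) hmem
  omega

lemma one_le_mfact (α : MultiIndex) : 1 ≤ mfact α := by
  unfold mfact Finsupp.prod
  exact Finset.one_le_prod' fun n _ => Nat.one_le_iff_ne_zero.mpr (Nat.factorial_ne_zero _)

lemma mfact_eq_prod {α : MultiIndex} {s : Finset ℕ} (h : α.support ⊆ s) :
    mfact α = ∏ n ∈ s, (α n).factorial :=
  Finsupp.prod_of_support_subset α h _ (fun _ _ => rfl)

lemma prod_mfact_dvd {ι : Type*} (s : Finset ι) (γ : ι → MultiIndex) :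
    (∏ i ∈ s, mfact (γ i)) ∣ mfact (∑ i ∈ s, γ i) := by
  classical
  set T := (∑ i ∈ s, γ i).support ∪ s.biUnion (fun i => (γ i).support) with hT
  have h1 : mfact (∑ i ∈ s, γ i) = ∏ n ∈ T, ((∑ i ∈ s, γ i) n).factorial :=
    mfact_eq_prod (by rw [hT]; exact Finset.subset_union_left)
  have h2 : ∀ i ∈ s, mfact (γ i) = ∏ n ∈ T, ((γ i) n).factorial := fun i hi =>
    mfact_eq_prod (fun n hn => by
      rw [hT]; exact Finset.mem_union_right _ (Finset.mem_biUnion.mpr ⟨i, hi, hn⟩))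
  rw [h1, Finset.prod_congr rfl h2, Finset.prod_comm]
  refine Finset.prod_dvd_prod_of_dvd _ _ fun n _ => ?_
  rw [Finsupp.finset_sum_apply]
  exact Nat.prod_factorial_dvd_factorial_sum _ _

lemma fact_mul_pow_le {a c : ℕ} (hc : c ≤ a + 1) : ∀ d, a.factorial * c ^ d ≤ (a + d).factorial := by
  intro d
  induction d with
  | zero => simp
  | succ d ih =>
    have h2 : c ≤ a + d + 1 := by omega
    have he : a + (d+1) = (a+d)+1 := by omega
    calc a.factorial * c ^ (d+1) = a.factorial * c ^ d * c := by ring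
    _ ≤ (a+d).factorial * (a+d+1) := Nat.mul_le_mul ih h2
    _ = (a + (d+1)).factorial := by rw [he, Nat.factorial_succ]; ring

lemma mul_fact_le {a b : ℕ} (h : a < b) : b * a.factorial ≤ b.factorial := by
  obtain ⟨m, rfl⟩ : ∃ m, b = m + 1 := ⟨b - 1, by omega⟩
  rw [Nat.factorial_succ]
  exact Nat.mul_le_mul_left _ (Nat.factorial_le (by omega))

lemma tuple_finite (k : ℕ) (α : MultiIndex) :
    {γ : Fin k → MultiIndex | (∀ i, γ i ≠ 0) ∧ ∑ i, γ i = α}.Finite := by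
  classical
  apply Set.Finite.subset (Fintype.piFinset fun _ : Fin k => Finset.Iic α).finite_toSet
  rintro γ ⟨-, hsum⟩
  simp only [Finset.coe_sort_coe, Finset.mem_coe, Fintype.mem_piFinset, Finset.mem_Iic]
  intro i
  calc γ i ≤ ∑ j, γ j := Finset.single_le_sum (fun j _ => zero_le) (Finset.mem_univ i)
  _ = α := hsum

lemma card_Iic_le (α : MultiIndex) : (Finset.Iic α).card ≤ 2 ^ msize α := by
  classical
  rw [Finsupp.card_Iic, msize_def]
  calc ∏ n ∈ α.support, (Finset.Iic (α n)).card = ∏ n ∈ α.support, (α n + 1) := by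
        simp [Nat.card_Iic]
  _ ≤ ∏ n ∈ α.support, 2 ^ (α n) :=
        Finset.prod_le_prod' fun n _ => Nat.succ_le_of_lt Nat.lt_two_pow_self
  _ = 2 ^ ∑ n ∈ α.support, α n := Finset.prod_pow_eq_pow_sum _ _ _

lemma tuple_card_le (k : ℕ) (α : MultiIndex) :
    (tuple_finite k α).toFinset.card ≤ 2 ^ (msize α * k) := by
  classical
  have hsub : (tuple_finite k α).toFinset ⊆ Fintype.piFinset fun _ : Fin k => Finset.Iic α := by
    intro γ hγ
    rw [Set.Finite.mem_toFinset] at hγ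
    obtain ⟨-, hsum⟩ := hγ
    rw [Fintype.mem_piFinset]
    intro i
    rw [Finset.mem_Iic]
    calc γ i ≤ ∑ j, γ j := Finset.single_le_sum (fun j _ => zero_le) (Finset.mem_univ i)
    _ = α := hsum
  calc (tuple_finite k α).toFinset.card
      ≤ (Fintype.piFinset fun _ : Fin k => Finset.Iic α).card := Finset.card_le_card hsub
  _ = (Finset.Iic α).card ^ k := Fintype.card_piFinset_const _ _
  _ ≤ (2 ^ msize α) ^ k := Nat.pow_le_pow_left (card_Iic_le α) k
  _ = 2 ^ (msize α * k) := by rw [← pow_mul]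

lemma Jsum_le {L : MultiIndex → ℝ} {k : ℕ} {α : MultiIndex} {bound : ℝ}
    (hb : 0 ≤ bound)
    (h : ∀ γ : Fin k → MultiIndex, (∀ i, γ i ≠ 0) → ∑ i, γ i = α → ∏ i, L (γ i) ≤ bound) :
    Jsum L k α ≤ (2:ℝ) ^ (msize α * k) * bound := by
  classical
  unfold Jsum
  rw [← Set.Finite.coe_toFinset (tuple_finite k α), finsum_mem_coe_finset]
  calc ∑ γ ∈ (tuple_finite k α).toFinset, ∏ i, L (γ i)
      ≤ ∑ _γ ∈ (tuple_finite k α).toFinset, bound := by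
        refine Finset.sum_le_sum fun γ hγ => ?_
        rw [Set.Finite.mem_toFinset] at hγ
        exact h γ hγ.1 hγ.2
  _ = (tuple_finite k α).toFinset.card * bound := by rw [Finset.sum_const, nsmul_eq_mul]
  _ ≤ (2:ℝ) ^ (msize α * k) * bound := by
        refine mul_le_mul_of_nonneg_right ?_ hb
        calc ((tuple_finite k α).toFinset.card : ℝ) ≤ ((2 ^ (msize α * k) : ℕ) : ℝ) := by
              exact_mod_cast tuple_card_le k α
        _ = (2:ℝ) ^ (msize α * k) := by push_cast; ring

set_option maxHeartbeats 1000000 in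
theorem stmt_13 (r : ℕ) (hr : 2 ≤ r) (p K mt C : ℝ) (hp : 0 ≤ p) (hK : 0 < K)
    (hmt : 1 ≤ mt) (hC : 1 ≤ C) (p₀ : ℝ) (hp₀ : p < p₀) (r₀ : ℕ)
    (hr₀ : 2 * (r + mt * K + mt * (2 * C) ^ 2) < (r₀ : ℝ))
    (L : MultiIndex → ℝ) (hL0 : ∀ α, 0 ≤ L α)
    (h1 : ∀ α : MultiIndex, msize α = 1 →
      L α ≤ mt * K * (mfact α : ℝ) * ((r ^ (msize α) ^ 3).factorial : ℝ) * wt p α)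
    (h2 : ∀ α : MultiIndex, 2 ≤ msize α →
      L α ≤ mt * (K * (mfact α : ℝ) * ((r ^ (msize α) ^ 3).factorial : ℝ) * wt p α +
        ∑ k ∈ Finset.Icc 2 (msize α), C ^ k * Jsum L k α)) :
    ∀ α : MultiIndex, 1 ≤ msize α →
      L α ≤ (mfact α : ℝ) * wt p₀ α * ((r₀ ^ (msize α) ^ 3).factorial : ℝ) := by
  classical
  have hp₀0 : 0 ≤ p₀ := le_of_lt (lt_of_le_of_lt hp hp₀)
  have hmt0 : 0 < mt := lt_of_lt_of_le one_pos hmt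
  have hC0 : 0 < C := lt_of_lt_of_le one_pos hC
  have hrR : (2:ℝ) ≤ (r:ℝ) := by exact_mod_cast hr
  have hq1 : 0 < mt * K := mul_pos hmt0 hK
  have hq2 : (4:ℝ) ≤ mt * (2*C)^2 := by
    nlinarith [mul_nonneg (sub_nonneg.mpr hmt) (sq_nonneg (2*C)),
      mul_nonneg hC0.le (sub_nonneg.mpr hC)]
  have h2mtK : 2 * (mt * K) < (r₀:ℝ) := by nlinarith
  have hq3 : 4 * mt ≤ mt * (2*C)^2 := by
    nlinarith [mul_nonneg (mul_nonneg hmt0.le (sub_nonneg.mpr hC)) (by linarith : (0:ℝ) ≤ C + 1)]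
  have h2mt : 2 * mt < (r₀:ℝ) := by nlinarith
  have hq4 : 4 * C ≤ (2*C)^2 := by nlinarith [mul_nonneg hC0.le (sub_nonneg.mpr hC)]
  have hq5 : (2*C)^2 ≤ mt * (2*C)^2 := by
    nlinarith [mul_nonneg (sub_nonneg.mpr hmt) (sq_nonneg (2*C))]
  have hCr : C ≤ (r₀:ℝ) := by nlinarith
  have hrr₀ : r < r₀ := by
    have : (r:ℝ) < (r₀:ℝ) := by nlinarith
    exact_mod_cast this
  have hr₀4 : 4 ≤ r₀ := by
    have h4 : (4:ℝ) < (r₀:ℝ) := by nlinarith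
    have : (4:ℕ) < r₀ := by exact_mod_cast h4
    omega
  -- strong induction on the size
  suffices H : ∀ N, ∀ α : MultiIndex, msize α = N → 1 ≤ N →
      L α ≤ (mfact α : ℝ) * wt p₀ α * ((r₀ ^ (msize α) ^ 3).factorial : ℝ) by
    intro α hα; exact H (msize α) α rfl hα
  intro N
  induction N using Nat.strong_induction_on with
  | _ N IH =>
  intro α hN h1N
  rcases Nat.lt_or_ge N 2 with hN2 | hN2
  · -- base case: msize α = 1
    have hmα : msize α = 1 := by omega
    have hb := h1 α hmα
    rw [hmα] at hb ⊢
    norm_num at hb ⊢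
    have hw : wt p α ≤ wt p₀ α := wt_mono hp₀.le α
    have hmfnn : (0:ℝ) ≤ (mfact α : ℝ) := Nat.cast_nonneg _
    have hw0 : 0 ≤ wt p α := wt_nonneg p α
    have hf : (r₀:ℝ) * (r.factorial:ℝ) ≤ (r₀.factorial : ℝ) := by
      exact_mod_cast mul_fact_le hrr₀
    have hmtK : mt * K ≤ (r₀:ℝ) := by linarith
    calc L α ≤ mt * K * (mfact α:ℝ) * (r.factorial:ℝ) * wt p α := hb
    _ ≤ mt * K * (mfact α:ℝ) * (r.factorial:ℝ) * wt p₀ α := by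
        refine mul_le_mul_of_nonneg_left hw ?_
        have : (0:ℝ) ≤ (r.factorial:ℝ) := Nat.cast_nonneg _
        positivity
    _ ≤ (r₀:ℝ) * (mfact α:ℝ) * (r.factorial:ℝ) * wt p₀ α := by
        have hwnn : 0 ≤ wt p₀ α := wt_nonneg p₀ α
        have hfr : (0:ℝ) ≤ (r.factorial:ℝ) := Nat.cast_nonneg _
        refine mul_le_mul_of_nonneg_right ?_ hwnn
        refine mul_le_mul_of_nonneg_right ?_ hfr
        exact mul_le_mul_of_nonneg_right hmtK hmfnn
    _ = (mfact α:ℝ) * wt p₀ α * ((r₀:ℝ) * (r.factorial:ℝ)) := by ring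
    _ ≤ (mfact α:ℝ) * wt p₀ α * (r₀.factorial:ℝ) := by
        refine mul_le_mul_of_nonneg_left hf ?_
        exact mul_nonneg hmfnn (wt_nonneg p₀ α)
  · -- inductive step : msize α = m + 2
    obtain ⟨m, rfl⟩ : ∃ m, N = m + 2 := ⟨N - 2, by omega⟩
    have hmα : msize α = m + 2 := hN
    set B : ℕ := r₀ ^ (m+2)^3 with hB
    set M : ℕ := (m + 2) * r₀ ^ (m+1)^3 with hM
    have hwnn : 0 ≤ wt p₀ α := wt_nonneg p₀ α
    have hmfnn : (0:ℝ) ≤ (mfact α : ℝ) := Nat.cast_nonneg _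
    -- per-tuple bound
    have tuple_bd : ∀ k, 2 ≤ k → k ≤ m + 2 → ∀ γ : Fin k → MultiIndex,
        (∀ i, γ i ≠ 0) → ∑ i, γ i = α →
        ∏ i, L (γ i) ≤ (mfact α : ℝ) * wt p₀ α * (M.factorial : ℝ) := by
      intro k hk2 hkN γ hne hsum
      have hsizes : ∑ i, msize (γ i) = m + 2 := by
        rw [← msize_sum, hsum, hmα]
      have hge1 : ∀ i, 1 ≤ msize (γ i) := fun i => one_le_msize (hne i)
      have hlt : ∀ i, msize (γ i) ≤ m + 1 := by
        intro i
        have hnt : Nontrivial (Fin k) := Fin.nontrivial_iff_two_le.mpr hk2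
        obtain ⟨j, hj⟩ := exists_ne i
        have h1' : msize (γ i) + ∑ l ∈ Finset.univ.erase i, msize (γ l) = m + 2 := by
          rw [← hsizes]
          exact Finset.add_sum_erase _ (fun l => msize (γ l)) (Finset.mem_univ i)
        have h2' : 1 ≤ ∑ l ∈ Finset.univ.erase i, msize (γ l) := by
          calc 1 ≤ msize (γ j) := hge1 j
          _ ≤ ∑ l ∈ Finset.univ.erase i, msize (γ l) :=
            Finset.single_le_sum (f := fun l => msize (γ l)) (fun l _ => Nat.zero_le _)
              (Finset.mem_erase.mpr ⟨hj, Finset.mem_univ j⟩)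
        omega
      have hLb : ∀ i, L (γ i) ≤
          (mfact (γ i) : ℝ) * wt p₀ (γ i) * ((r₀ ^ (msize (γ i)) ^ 3).factorial : ℝ) :=
        fun i => IH (msize (γ i)) (by have := hlt i; omega) (γ i) rfl (hge1 i)
      have e2 : (∏ i, wt p₀ (γ i)) = wt p₀ α := by rw [← wt_sum, hsum]
      have e1 : (∏ i, (mfact (γ i) : ℝ)) ≤ (mfact α : ℝ) := by
        have hd := prod_mfact_dvd Finset.univ γ
        rw [hsum] at hd
        have : (∏ i, mfact (γ i)) ≤ mfact α :=
          Nat.le_of_dvd (lt_of_lt_of_le one_pos (one_le_mfact α)) hd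
        exact_mod_cast this
      have e3 : (∏ i, ((r₀ ^ (msize (γ i)) ^ 3).factorial : ℝ)) ≤ (M.factorial : ℝ) := by
        have hdvd := Nat.prod_factorial_dvd_factorial_sum Finset.univ
          (fun i => r₀ ^ (msize (γ i)) ^ 3)
        have hsle : (∑ i, r₀ ^ (msize (γ i)) ^ 3) ≤ M := by
          calc ∑ i : Fin k, r₀ ^ (msize (γ i)) ^ 3 ≤ ∑ _i : Fin k, r₀ ^ (m+1)^3 := by
                refine Finset.sum_le_sum fun i _ => Nat.pow_le_pow_right (by omega) ?_
                exact Nat.pow_le_pow_left (hlt i) 3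
          _ = k * r₀ ^ (m+1)^3 := by
                rw [Finset.sum_const, Finset.card_univ, Fintype.card_fin, smul_eq_mul]
          _ ≤ (m+2) * r₀ ^ (m+1)^3 := Nat.mul_le_mul_right _ hkN
        have hnat : (∏ i, (r₀ ^ (msize (γ i)) ^ 3).factorial) ≤ M.factorial :=
          le_trans (Nat.le_of_dvd (Nat.factorial_pos _) hdvd) (Nat.factorial_le hsle)
        exact_mod_cast hnat
      calc ∏ i, L (γ i)
          ≤ ∏ i, ((mfact (γ i) : ℝ) * wt p₀ (γ i) * ((r₀ ^ (msize (γ i)) ^ 3).factorial : ℝ)) :=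
            Finset.prod_le_prod (fun i _ => hL0 _) (fun i _ => hLb i)
      _ = (∏ i, (mfact (γ i) : ℝ)) * (∏ i, wt p₀ (γ i)) *
            (∏ i, ((r₀ ^ (msize (γ i)) ^ 3).factorial : ℝ)) := by
            rw [Finset.prod_mul_distrib, Finset.prod_mul_distrib]
      _ ≤ (mfact α : ℝ) * wt p₀ α * (M.factorial : ℝ) := by
            rw [e2]
            have h30 : (0:ℝ) ≤ ∏ i, ((r₀ ^ (msize (γ i)) ^ 3).factorial : ℝ) :=
              Finset.prod_nonneg fun i _ => Nat.cast_nonneg _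
            have hp1 : (0:ℝ) ≤ ∏ i, (mfact (γ i) : ℝ) :=
              Finset.prod_nonneg fun i _ => Nat.cast_nonneg _
            exact mul_le_mul (mul_le_mul_of_nonneg_right e1 hwnn) e3 h30
              (mul_nonneg hmfnn hwnn)
    -- bound on the sum of Jsum terms
    set T : ℝ := ((m+2):ℝ) * (C ^ (m+2) * 2 ^ ((m+2)*(m+2))) with hT
    set F : ℝ := (mfact α : ℝ) * wt p₀ α with hF
    have hF1 : (1:ℝ) ≤ F := by
      have h1' : (1:ℝ) ≤ (mfact α : ℝ) := by exact_mod_cast one_le_mfact α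
      have h2' : 1 ≤ wt p₀ α := one_le_wt hp₀0 α
      calc (1:ℝ) = 1 * 1 := by ring
      _ ≤ (mfact α : ℝ) * wt p₀ α := mul_le_mul h1' h2' zero_le_one (by linarith)
    have hF0 : 0 ≤ F := by linarith
    have hQ0 : 0 ≤ F * (M.factorial : ℝ) := mul_nonneg hF0 (Nat.cast_nonneg _)
    have sum_bd : ∑ k ∈ Finset.Icc 2 (msize α), C ^ k * Jsum L k α ≤
        T * (F * (M.factorial : ℝ)) := by
      rw [hmα]
      have D0 : (0:ℝ) ≤ C ^ (m+2) * 2 ^ ((m+2)*(m+2)) * (F * (M.factorial:ℝ)) := by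
        have : (0:ℝ) ≤ C ^ (m+2) := by positivity
        have h2' : (0:ℝ) ≤ (2:ℝ) ^ ((m+2)*(m+2)) := by positivity
        exact mul_nonneg (mul_nonneg this h2') hQ0
      calc ∑ k ∈ Finset.Icc 2 (m+2), C ^ k * Jsum L k α
          ≤ ∑ _k ∈ Finset.Icc 2 (m+2),
              C ^ (m+2) * 2 ^ ((m+2)*(m+2)) * (F * (M.factorial:ℝ)) := by
            refine Finset.sum_le_sum fun k hk => ?_
            rw [Finset.mem_Icc] at hk
            have hJ : Jsum L k α ≤ (2:ℝ) ^ (msize α * k) * (F * (M.factorial:ℝ)) :=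
              Jsum_le hQ0 fun γ hne hsum => tuple_bd k hk.1 hk.2 γ hne hsum
            have hCk : C ^ k ≤ C ^ (m+2) := pow_le_pow_right₀ hC hk.2
            have h2p : (2:ℝ) ^ (msize α * k) ≤ 2 ^ ((m+2)*(m+2)) := by
              refine pow_le_pow_right₀ one_le_two ?_
              rw [hmα]; exact Nat.mul_le_mul_left _ hk.2
            calc C ^ k * Jsum L k α
                ≤ C ^ k * ((2:ℝ) ^ (msize α * k) * (F * (M.factorial:ℝ))) := by
                  refine mul_le_mul_of_nonneg_left hJ (by positivity)
            _ ≤ C ^ (m+2) * ((2:ℝ) ^ ((m+2)*(m+2)) * (F * (M.factorial:ℝ))) := by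
                  refine mul_le_mul hCk ?_ ?_ (by positivity)
                  · exact mul_le_mul_of_nonneg_right h2p hQ0
                  · exact mul_nonneg (by positivity) hQ0
            _ = C ^ (m+2) * 2 ^ ((m+2)*(m+2)) * (F * (M.factorial:ℝ)) := by ring
      _ = ((Finset.Icc 2 (m+2)).card : ℝ) *
            (C ^ (m+2) * 2 ^ ((m+2)*(m+2)) * (F * (M.factorial:ℝ))) := by
            rw [Finset.sum_const, nsmul_eq_mul]
      _ ≤ ((m+2):ℝ) * (C ^ (m+2) * 2 ^ ((m+2)*(m+2)) * (F * (M.factorial:ℝ))) := by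
            refine mul_le_mul_of_nonneg_right ?_ D0
            have : (Finset.Icc 2 (m+2)).card = m + 1 := by
              rw [Nat.card_Icc]; omega
            rw [this]
            exact_mod_cast Nat.le_succ (m+1)
      _ = T * (F * (M.factorial : ℝ)) := by rw [hT]; ring
    -- claim A
    have natA : r₀ ^ (m+2)^3 * (r ^ (m+2)^3).factorial ≤ B.factorial := by
      refine mul_fact_le ?_
      exact Nat.pow_lt_pow_left hrr₀ (by positivity)
    have natA2 : r₀ ≤ r₀ ^ (m+2)^3 := Nat.le_self_pow (by positivity) r₀
    have claimA : mt * K * ((r ^ (m+2)^3).factorial : ℝ) ≤ 1/2 * (B.factorial : ℝ) := by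
      have c1 : ((r₀ ^ (m+2)^3 : ℕ):ℝ) * ((r ^ (m+2)^3).factorial : ℝ) ≤ (B.factorial : ℝ) := by
        exact_mod_cast natA
      have c2 : (r₀:ℝ) ≤ ((r₀ ^ (m+2)^3 : ℕ):ℝ) := by exact_mod_cast natA2
      have hfp : (0:ℝ) < ((r ^ (m+2)^3).factorial : ℝ) := by
        exact_mod_cast Nat.factorial_pos _
      have c3 : 2*(mt*K) * ((r ^ (m+2)^3).factorial:ℝ) ≤
          ((r₀ ^ (m+2)^3 : ℕ):ℝ) * ((r ^ (m+2)^3).factorial : ℝ) :=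
        mul_le_mul_of_nonneg_right (le_trans h2mtK.le c2) hfp.le
      linarith
    -- claim B
    have natB1 : r₀ ≤ M + 1 := by
      have h1' : r₀ ≤ r₀ ^ (m+1)^3 := Nat.le_self_pow (by positivity) r₀
      have h2' : r₀ ^ (m+1)^3 ≤ (m+2) * r₀ ^ (m+1)^3 := Nat.le_mul_of_pos_left _ (by omega)
      omega
    have natB2 : M + 3*(m+2)^2 ≤ B := by
      have hX : 1 ≤ r₀ ^ (m+1)^3 := Nat.one_le_pow _ _ (by omega)
      have hE : (m+2) + 3*(m+2)^2 ≤ r₀ ^ (3*m^2+9*m+7) := by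
        have l1 : 2*(3*m^2+9*m+7) < 2 ^ (2*(3*m^2+9*m+7)) := Nat.lt_two_pow_self
        have l2 : (2:ℕ) ^ (2*(3*m^2+9*m+7)) = 4 ^ (3*m^2+9*m+7) := by
          rw [pow_mul]; norm_num
        have l3 : (4:ℕ) ^ (3*m^2+9*m+7) ≤ r₀ ^ (3*m^2+9*m+7) := Nat.pow_le_pow_left hr₀4 _
        have l4 : 3*m^2+13*m+14 ≤ 2*(3*m^2+9*m+7) := by
          generalize m^2 = q
          omega
        calc (m+2) + 3*(m+2)^2 = 3*m^2+13*m+14 := by ring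
        _ ≤ 2*(3*m^2+9*m+7) := l4
        _ ≤ 2 ^ (2*(3*m^2+9*m+7)) := le_of_lt l1
        _ = 4 ^ (3*m^2+9*m+7) := l2
        _ ≤ r₀ ^ (3*m^2+9*m+7) := l3
      calc M + 3*(m+2)^2 = (m+2) * r₀ ^ (m+1)^3 + 3*(m+2)^2 := by rw [hM]
      _ ≤ (m+2) * r₀ ^ (m+1)^3 + 3*(m+2)^2 * r₀ ^ (m+1)^3 :=
            Nat.add_le_add_left (Nat.le_mul_of_pos_right _ (lt_of_lt_of_le zero_lt_one hX)) _
      _ = ((m+2) + 3*(m+2)^2) * r₀ ^ (m+1)^3 := by ring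
      _ ≤ r₀ ^ (3*m^2+9*m+7) * r₀ ^ (m+1)^3 := Nat.mul_le_mul_right _ hE
      _ = r₀ ^ ((m+2)^3) := by rw [← pow_add]; congr 1; ring
      _ = B := by rw [hB]
    have natB3 : M.factorial * r₀ ^ (3*(m+2)^2) ≤ B.factorial :=
      le_trans (fact_mul_pow_le natB1 _) (Nat.factorial_le natB2)
    have hr₀R : (1:ℝ) ≤ (r₀:ℝ) := by exact_mod_cast (by omega : 1 ≤ r₀)
    have h2r₀R : (2:ℝ) ≤ (r₀:ℝ) := by exact_mod_cast (by omega : 2 ≤ r₀)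
    have claimB : mt * (T * (M.factorial : ℝ)) ≤ 1/2 * (B.factorial : ℝ) := by
      have rb1 : ((m+2):ℝ) ≤ (r₀:ℝ) ^ (m+2) := by
        have q1 : (m+2) ≤ 2 ^ (m+2) := le_of_lt Nat.lt_two_pow_self
        have q2 : (m+2 : ℕ) ≤ r₀ ^ (m+2) :=
          le_trans q1 (Nat.pow_le_pow_left (by omega) _)
        exact_mod_cast q2
      have rb2 : C ^ (m+2) ≤ (r₀:ℝ) ^ (m+2) := pow_le_pow_left₀ hC0.le hCr _
      have rb3 : (2:ℝ) ^ ((m+2)*(m+2)) ≤ (r₀:ℝ) ^ ((m+2)*(m+2)) :=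
        pow_le_pow_left₀ (by norm_num) h2r₀R _
      have hMf : (0:ℝ) ≤ (M.factorial : ℝ) := Nat.cast_nonneg _
      calc mt * (T * (M.factorial : ℝ))
          = mt * ((m+2):ℝ) * C ^ (m+2) * (2:ℝ) ^ ((m+2)*(m+2)) * (M.factorial : ℝ) := by
            rw [hT]; ring
      _ ≤ ((r₀:ℝ)/2) * ((r₀:ℝ) ^ (m+2)) * ((r₀:ℝ) ^ (m+2)) * ((r₀:ℝ) ^ ((m+2)*(m+2))) *
            (M.factorial : ℝ) := by
            refine mul_le_mul_of_nonneg_right ?_ hMf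
            have g1 : mt ≤ (r₀:ℝ)/2 := by linarith
            have n1 : (0:ℝ) ≤ mt := hmt0.le
            have n2 : (0:ℝ) ≤ ((m+2):ℝ) := by positivity
            have n3 : (0:ℝ) ≤ C ^ (m+2) := by positivity
            have n4 : (0:ℝ) ≤ (2:ℝ) ^ ((m+2)*(m+2)) := by positivity
            have s1 : mt * ((m+2):ℝ) ≤ ((r₀:ℝ)/2) * ((r₀:ℝ) ^ (m+2)) :=
              mul_le_mul g1 rb1 n2 (by positivity)
            have s2 : mt * ((m+2):ℝ) * C ^ (m+2) ≤
                ((r₀:ℝ)/2) * ((r₀:ℝ) ^ (m+2)) * ((r₀:ℝ) ^ (m+2)) :=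
              mul_le_mul s1 rb2 n3 (by positivity)
            exact mul_le_mul s2 rb3 n4 (by positivity)
      _ = 1/2 * ((r₀:ℝ) ^ ((m+3)^2) * (M.factorial : ℝ)) := by ring
      _ ≤ 1/2 * ((r₀:ℝ) ^ (3*(m+2)^2) * (M.factorial : ℝ)) := by
            have hpp : (r₀:ℝ) ^ ((m+3)^2) ≤ (r₀:ℝ) ^ (3*(m+2)^2) :=
              pow_le_pow_right₀ hr₀R (by
                calc (m+3)^2 = m^2+6*m+9 := by ring
                _ ≤ 3*(m^2+4*m+4) := by generalize m^2 = q; omega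
                _ = 3*(m+2)^2 := by ring)
            have := mul_le_mul_of_nonneg_right hpp hMf
            linarith
      _ ≤ 1/2 * (B.factorial : ℝ) := by
            have hcast : (r₀:ℝ) ^ (3*(m+2)^2) * (M.factorial : ℝ) ≤ (B.factorial : ℝ) := by
              have := natB3
              rw [mul_comm] at this
              exact_mod_cast this
            linarith
    -- assemble
    have hfinal := h2 α (by omega)
    rw [hmα] at hfinal ⊢
    set fr : ℝ := ((r ^ (m+2)^3).factorial : ℝ) with hfr
    have hfr0 : (0:ℝ) ≤ fr := Nat.cast_nonneg _
    have hwtm : wt p α ≤ wt p₀ α := wt_mono hp₀.le α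
    have key : K * (mfact α:ℝ) * fr * wt p α ≤ K * fr * F := by
      calc K * (mfact α:ℝ) * fr * wt p α ≤ K * (mfact α:ℝ) * fr * wt p₀ α := by
            refine mul_le_mul_of_nonneg_left hwtm ?_
            exact mul_nonneg (mul_nonneg hK.le hmfnn) hfr0
      _ = K * fr * F := by rw [hF]; ring
    calc L α ≤ mt * (K * (mfact α:ℝ) * fr * wt p α +
            ∑ k ∈ Finset.Icc 2 (m+2), C ^ k * Jsum L k α) := hfinal
    _ ≤ mt * (K * fr * F + T * (F * (M.factorial:ℝ))) := by
          refine mul_le_mul_of_nonneg_left ?_ hmt0.le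
          refine add_le_add key ?_
          have := sum_bd
          rw [hmα] at this
          exact this
    _ = F * (mt * K * fr + mt * (T * (M.factorial:ℝ))) := by ring
    _ ≤ F * (1/2 * (B.factorial:ℝ) + 1/2 * (B.factorial:ℝ)) := by
          refine mul_le_mul_of_nonneg_left ?_ hF0
          exact add_le_add claimA claimB
    _ = F * (B.factorial:ℝ) := by ring
    _ = (mfact α : ℝ) * wt p₀ α * ((r₀ ^ (m+2)^3).factorial : ℝ) := by rw [hF, hB]
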